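/- (Appendix B: equivalence of the A_k-evolution equations with the Calogero equations of motion.) Let κ ≥ 1 be an integer and Q₁, …, Q_κ : ℝ → ℝ twice continuously differentiable with Q_j(t) ≠ Q_k(t) for all j ≠ k and all t. Define R_k(t) = Σ_{j≠k} 1/(Q_k − Q_j) and A_k(t) = κ·Q_k' + t − Q_k² − 2·R_k. Then for every k and every t, the equation κ·A_k' = −2·Q_k·A_k + 2·Σ_{j≠k} (A_k − A_j)/(Q_k − Q_j)² holds if and only if the Calogero equation of motion holds: κ²·Q_k'' = −2·Q_k·(t − Q_k²) + (κ − 2) − Σ_{j≠k} 8/(Q_k − Q_j)³. -/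

import Mathlib

open scoped BigOperators

lemma antisym_double_sum {ι : Type*} [DecidableEq ι] (S : Finset ι) (f : ι → ι → ℝ)
    (hf : ∀ j ∈ S, ∀ l ∈ S, j ≠ l → f j l = - f l j) :
    ∑ j ∈ S, ∑ l ∈ S.erase j, f j l = 0 := by
  classical
  set G : ι → ι → ℝ := fun j l => if l = j then 0 else f j l with hG
  have h1 : ∑ j ∈ S, ∑ l ∈ S.erase j, f j l = ∑ j ∈ S, ∑ l ∈ S, G j l := by
    refine Finset.sum_congr rfl fun j hj => ?_
    rw [show ∑ l ∈ S.erase j, f j l = ∑ l ∈ S.erase j, G j l from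
      Finset.sum_congr rfl fun l hl => by
        simp [hG, (Finset.mem_erase.mp hl).1]]
    exact Finset.sum_erase S (by simp [hG])
  have h2 : ∑ j ∈ S, ∑ l ∈ S, G j l = - ∑ j ∈ S, ∑ l ∈ S, G j l := by
    nth_rewrite 1 [Finset.sum_comm]
    rw [← Finset.sum_neg_distrib]
    refine Finset.sum_congr rfl fun j hj => ?_
    rw [← Finset.sum_neg_distrib]
    refine Finset.sum_congr rfl fun l hl => ?_
    by_cases h : l = j
    · simp [hG, h]
    · simp only [hG, if_neg h, if_neg (Ne.symm h)]
      rw [hf l hl j hj h]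
  rw [h1]; linarith [h2]

lemma key_identity (κ : ℕ) (q : Fin κ → ℝ) (hq : ∀ j l : Fin κ, j ≠ l → q j ≠ q l) (k : Fin κ) :
    ∑ j ∈ Finset.univ.erase k,
      4 * ((∑ l ∈ Finset.univ.erase k, 1 / (q k - q l)) - ∑ l ∈ Finset.univ.erase j, 1 / (q j - q l))
        / (q k - q j) ^ 2
    = ∑ j ∈ Finset.univ.erase k, 8 / (q k - q j) ^ 3 := by
  classical
  have hd : ∀ j l : Fin κ, j ≠ l → q j - q l ≠ 0 := fun j l h => sub_ne_zero.mpr (hq j l h)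
  have step : ∀ j ∈ Finset.univ.erase k,
      4 * ((∑ l ∈ Finset.univ.erase k, 1 / (q k - q l)) - ∑ l ∈ Finset.univ.erase j, 1 / (q j - q l))
        / (q k - q j) ^ 2
      = 8 / (q k - q j) ^ 3
        + ∑ l ∈ (Finset.univ.erase k).erase j,
            (-4) / ((q k - q j) * ((q k - q l) * (q j - q l))) := by
    intro j hj
    have hjk : j ≠ k := (Finset.mem_erase.mp hj).1
    have hRk : ∑ l ∈ Finset.univ.erase k, 1 / (q k - q l)
        = 1 / (q k - q j) + ∑ l ∈ (Finset.univ.erase k).erase j, 1 / (q k - q l) :=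
      (Finset.add_sum_erase _ _ (by simp [hjk])).symm
    have hRj : ∑ l ∈ Finset.univ.erase j, 1 / (q j - q l)
        = 1 / (q j - q k) + ∑ l ∈ (Finset.univ.erase k).erase j, 1 / (q j - q l) := by
      rw [Finset.erase_right_comm]
      exact (Finset.add_sum_erase _ _ (by simp [hjk.symm])).symm
    rw [hRk, hRj]
    rw [show (1 / (q k - q j) + ∑ l ∈ (Finset.univ.erase k).erase j, 1 / (q k - q l))
        - (1 / (q j - q k) + ∑ l ∈ (Finset.univ.erase k).erase j, 1 / (q j - q l))
        = (1 / (q k - q j) - 1 / (q j - q k))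
          + ∑ l ∈ (Finset.univ.erase k).erase j, (1 / (q k - q l) - 1 / (q j - q l)) by
      rw [Finset.sum_sub_distrib]; ring]
    rw [mul_add, add_div, Finset.mul_sum, Finset.sum_div]
    congr 1
    · have h1 := hd k j hjk.symm
      have h2 := hd j k hjk
      field_simp
      ring
    · refine Finset.sum_congr rfl fun l hl => ?_
      have hlj : l ≠ j := (Finset.mem_erase.mp hl).1
      have hlk : l ≠ k := (Finset.mem_erase.mp (Finset.mem_erase.mp hl).2).1
      have h1 := hd k j hjk.symm
      have h2 := hd k l hlk.symm
      have h3 := hd j l hlj.symm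
      have h4 := hd j k hjk
      have h5 := hd l k hlk
      have h6 := hd l j hlj
      field_simp
      ring
  rw [Finset.sum_congr rfl step, Finset.sum_add_distrib]
  have hz : ∑ j ∈ Finset.univ.erase k, ∑ l ∈ (Finset.univ.erase k).erase j,
      (-4) / ((q k - q j) * ((q k - q l) * (q j - q l))) = 0 := by
    apply antisym_double_sum
    intro j hj l hl hjl
    have hjk : j ≠ k := (Finset.mem_erase.mp hj).1
    have hlk : l ≠ k := (Finset.mem_erase.mp hl).1
    have h1 := hd k j hjk.symm
    have h2 := hd k l hlk.symm
    have h3 := hd j l hjl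
    have h4 := hd l j hjl.symm
    field_simp
    ring
  rw [hz, add_zero]

lemma main_alg (κ : ℕ) (hκ : 1 ≤ κ) (q p : Fin κ → ℝ) (t dd : ℝ)
    (hq : ∀ j l : Fin κ, j ≠ l → q j ≠ q l) (k : Fin κ) :
    (κ:ℝ) * ((κ:ℝ) * dd + 1 - 2 * q k * p k
        - 2 * (∑ j ∈ Finset.univ.erase k, -(p k - p j) / (q k - q j)^2))
    - (-2 * q k * ((κ:ℝ) * p k + t - q k ^ 2 - 2 * ∑ l ∈ Finset.univ.erase k, 1/(q k - q l))
       + 2 * ∑ j ∈ Finset.univ.erase k,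
          (((κ:ℝ) * p k + t - q k ^ 2 - 2 * ∑ l ∈ Finset.univ.erase k, 1/(q k - q l))
           - ((κ:ℝ) * p j + t - q j ^ 2 - 2 * ∑ l ∈ Finset.univ.erase j, 1/(q j - q l)))
            / (q k - q j)^2)
    = (κ:ℝ)^2 * dd - (-2 * q k * (t - q k ^ 2) + ((κ:ℝ) - 2)
       - ∑ j ∈ Finset.univ.erase k, 8 / (q k - q j)^3) := by
  classical
  have hkey := key_identity κ q hq k
  have hd : ∀ j l : Fin κ, j ≠ l → q j - q l ≠ 0 := fun j l h => sub_ne_zero.mpr (hq j l h)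
  have hterm : ∀ j ∈ Finset.univ.erase k,
      (((κ:ℝ) * p k + t - q k ^ 2 - 2 * ∑ l ∈ Finset.univ.erase k, 1/(q k - q l))
           - ((κ:ℝ) * p j + t - q j ^ 2 - 2 * ∑ l ∈ Finset.univ.erase j, 1/(q j - q l)))
            / (q k - q j)^2
      = (κ:ℝ) * ((p k - p j) / (q k - q j)^2)
        - 2 * q k * (1/(q k - q j)) + 1
        - 2 * (((∑ l ∈ Finset.univ.erase k, 1/(q k - q l))
                - ∑ l ∈ Finset.univ.erase j, 1/(q j - q l)) / (q k - q j)^2) := by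
    intro j hj
    have hjk : j ≠ k := (Finset.mem_erase.mp hj).1
    have h1 := hd k j hjk.symm
    field_simp
    ring
  rw [Finset.sum_congr rfl hterm]
  rw [Finset.sum_sub_distrib, Finset.sum_add_distrib, Finset.sum_sub_distrib,
    ← Finset.mul_sum, ← Finset.mul_sum, ← Finset.mul_sum]
  have hneg : ∑ j ∈ Finset.univ.erase k, -(p k - p j) / (q k - q j)^2
      = - ∑ j ∈ Finset.univ.erase k, (p k - p j) / (q k - q j)^2 := by
    rw [← Finset.sum_neg_distrib]
    exact Finset.sum_congr rfl fun j _ => neg_div _ _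
  rw [hneg]
  have hcard : ∑ _j ∈ Finset.univ.erase k, (1:ℝ) = (κ:ℝ) - 1 := by
    rw [Finset.sum_const, Finset.card_erase_of_mem (Finset.mem_univ k)]
    simp [Nat.cast_sub hκ]
  rw [hcard]
  have hkey' : 4 * ∑ j ∈ Finset.univ.erase k,
      ((∑ l ∈ Finset.univ.erase k, 1/(q k - q l))
        - ∑ l ∈ Finset.univ.erase j, 1/(q j - q l)) / (q k - q j)^2
      = ∑ j ∈ Finset.univ.erase k, 8 / (q k - q j)^3 := by
    rw [← hkey, Finset.mul_sum]
    exact Finset.sum_congr rfl fun j _ => (mul_div_assoc _ _ _).symm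
  linear_combination hkey'

/-- Appendix B: the evolution equation (3.23) for `A_k` is
pointwise equivalent to the Calogero equation of motion (3.29). -/
theorem A_evolution_iff_calogero
    (κ : ℕ) (hκ : 1 ≤ κ)
    (Q : Fin κ → ℝ → ℝ)
    (hQ : ∀ k, ContDiff ℝ 2 (Q k))
    (hQd : ∀ t, ∀ j k : Fin κ, j ≠ k → Q j t ≠ Q k t)
    (R : Fin κ → ℝ → ℝ)
    (hR : ∀ k t, R k t = ∑ j ∈ Finset.univ.erase k, 1 / (Q k t - Q j t))
    (A : Fin κ → ℝ → ℝ)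
    (hA : ∀ k t, A k t = (κ : ℝ) * deriv (Q k) t + t - (Q k t) ^ 2 - 2 * R k t) :
    ∀ k : Fin κ, ∀ t : ℝ,
      ((κ : ℝ) * deriv (A k) t
          = -2 * Q k t * A k t
            + 2 * ∑ j ∈ Finset.univ.erase k, (A k t - A j t) / (Q k t - Q j t) ^ 2)
      ↔
      ((κ : ℝ) ^ 2 * deriv (deriv (Q k)) t
          = -2 * Q k t * (t - (Q k t) ^ 2) + ((κ : ℝ) - 2)
            - ∑ j ∈ Finset.univ.erase k, 8 / (Q k t - Q j t) ^ 3) := by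
  intro k t
  have hQdiff : ∀ j, Differentiable ℝ (Q j) := fun j => (hQ j).differentiable (by norm_num)
  have hQ'diff : ∀ j, Differentiable ℝ (deriv (Q j)) := by
    intro j
    have h' : ContDiff ℝ ((1:ℕ) + 1) (Q j) := by norm_num at hQ ⊢; exact hQ j
    exact ((contDiff_succ_iff_deriv.mp h').2.2).differentiable (by norm_num)
  have hRder : HasDerivAt (R k)
      (∑ j ∈ Finset.univ.erase k,
        -(deriv (Q k) t - deriv (Q j) t) / (Q k t - Q j t) ^ 2) t := by
    have hRfun : R k = fun s => ∑ j ∈ Finset.univ.erase k, (Q k s - Q j s)⁻¹ :=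
      funext fun s => by rw [hR]; simp [one_div]
    rw [hRfun]
    apply HasDerivAt.fun_sum
    intro j hj
    have hjk : j ≠ k := (Finset.mem_erase.mp hj).1
    exact ((hQdiff k t).hasDerivAt.sub (hQdiff j t).hasDerivAt).inv
      (sub_ne_zero.mpr (hQd t k j hjk.symm))
  have hAder : HasDerivAt (A k)
      ((κ : ℝ) * deriv (deriv (Q k)) t + 1 - 2 * Q k t * deriv (Q k) t
        - 2 * ∑ j ∈ Finset.univ.erase k,
            -(deriv (Q k) t - deriv (Q j) t) / (Q k t - Q j t) ^ 2) t := by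
    have hAfun : A k = fun s => (κ : ℝ) * deriv (Q k) s + s - (Q k s) ^ 2 - 2 * R k s :=
      funext (hA k)
    rw [hAfun]
    have h1 := ((hQ'diff k t).hasDerivAt).const_mul (κ : ℝ)
    have h2 := hasDerivAt_id' t
    have h3 := ((hQdiff k t).hasDerivAt).fun_pow 2
    have h4 := hRder.const_mul (2 : ℝ)
    have := ((h1.fun_add h2).fun_sub h3).fun_sub h4
    refine this.congr_deriv ?_
    push_cast
    ring
  have hderivA : deriv (A k) t = (κ : ℝ) * deriv (deriv (Q k)) t + 1
      - 2 * Q k t * deriv (Q k) t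
      - 2 * ∑ j ∈ Finset.univ.erase k,
          -(deriv (Q k) t - deriv (Q j) t) / (Q k t - Q j t) ^ 2 := hAder.deriv
  have halg := main_alg κ hκ (fun j => Q j t) (fun j => deriv (Q j) t) t
    (deriv (deriv (Q k)) t) (fun j l h => hQd t j l h) k
  rw [hderivA]
  simp only [hA, hR]
  constructor <;> intro h <;> linarith [halg]
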